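/- Let p be a natural number, M > 0, C_b > 0, C_g > 0, and let a : ℤ×ℤ → ℂ satisfy |a_{j,k}| ≤ M for all (j,k); let b : ℤ×ℤ → ℂ be absolutely summable, Σ_{(j,k)∈ℤ²} |b_{j,k}| < ∞; and let g : ℤ×ℤ → ℂ satisfy |g_{m,n}| ≤ C_g · (1 + max(|m|,|n|))^{-(p+3)} for all (m,n). For a positive integer F define f̃^F_{m,n} := Σ_{|j|≤F, |k|≤F} a_{j,k} · b_{m−j, n−k}. Then there exists a constant C > 0 such that for all positive integers F, | Σ_{(m,n)∈ℤ², max(|m|,|n|)>F} f̃^F_{m,n} · g_{m,n} | ≤ C · F^{-p}. -/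

import Mathlib

/-- Tail estimate for the truncated convolution against a decaying kernel:
with `|a_{j,k}| ≤ M`, `b` absolutely summable, and
`|g_{m,n}| ≤ C_g (1 + max(|m|,|n|))^{-(p+3)}`, setting
`f̃^F_{m,n} = ∑_{|j|≤F,|k|≤F} a_{j,k} b_{m−j,n−k}`, there is `C > 0` such that
`|∑_{max(|m|,|n|)>F} f̃^F_{m,n} g_{m,n}| ≤ C F^{-p}` for all positive integers `F`. -/
theorem stmt8 (p : ℕ) (M Cb Cg : ℝ) (hM : 0 < M) (hCb : 0 < Cb) (hCg : 0 < Cg)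
    (a b g : ℤ × ℤ → ℂ)
    (ha : ∀ jk : ℤ × ℤ, ‖a jk‖ ≤ M)
    (hb : Summable fun jk : ℤ × ℤ => ‖b jk‖)
    (hg : ∀ mn : ℤ × ℤ,
      ‖g mn‖ ≤ Cg / (1 + ((max |mn.1| |mn.2| : ℤ) : ℝ)) ^ (p + 3)) :
    ∃ C > 0, ∀ F : ℕ, 0 < F →
      ‖∑' mn : {mn : ℤ × ℤ // (F : ℤ) < max |mn.1| |mn.2|},
          (∑ jk ∈ Finset.Icc (-(F : ℤ)) (F : ℤ) ×ˢ Finset.Icc (-(F : ℤ)) (F : ℤ),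
              a jk * b ((mn : ℤ × ℤ).1 - jk.1, (mn : ℤ × ℤ).2 - jk.2)) *
            g (mn : ℤ × ℤ)‖
        ≤ C / (F : ℝ) ^ p := by
  classical
  set B := ∑' jk : ℤ × ℤ, ‖b jk‖ with hBdef
  have hB0 : 0 ≤ B := tsum_nonneg fun _ => norm_nonneg _
  set e : ℝ := (3 : ℝ) / 2 with he
  -- the one-dimensional weight
  set u : ℤ → ℝ := fun m => (1 + (m.natAbs : ℝ)) ^ (-e) with hu_def
  have hupos : ∀ m, 0 < u m := fun m => Real.rpow_pos_of_pos (by positivity) _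
  have hψ : Summable fun n : ℕ => (1 + (n : ℝ)) ^ (-e) := by
    have h1 : Summable fun n : ℕ => 1 / (n : ℝ) ^ e :=
      Real.summable_one_div_nat_rpow.2 (by norm_num [he])
    have h2 : Summable fun n : ℕ => 1 / ((n + 1 : ℕ) : ℝ) ^ e :=
      h1.comp_injective fun x y hxy => by simpa using hxy
    refine h2.congr fun n => ?_
    rw [Real.rpow_neg (by positivity), one_div]
    push_cast
    ring_nf
  have hu : Summable u := by
    apply Summable.of_nat_of_neg
    · exact hψ.congr fun n => by simp [hu_def]
    · exact hψ.congr fun n => by simp [hu_def]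
  have hh2 : Summable fun mn : ℤ × ℤ => u mn.1 * u mn.2 :=
    hu.mul_of_nonneg hu (fun m => (hupos m).le) fun m => (hupos m).le
  set S2 := ∑' mn : ℤ × ℤ, u mn.1 * u mn.2 with hS2def
  have hS2 : 0 ≤ S2 := tsum_nonneg fun mn => by positivity
  set K := M * B * Cg with hKdef
  have hK : 0 ≤ K := by positivity
  refine ⟨K * S2 + 1, by positivity, ?_⟩
  intro F hF
  have hFpos : (0 : ℝ) < (F : ℝ) ^ p := by positivity
  set s : Finset (ℤ × ℤ) := Finset.Icc (-(F : ℤ)) (F : ℤ) ×ˢ Finset.Icc (-(F : ℤ)) (F : ℤ)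
  -- pointwise bound
  have key : ∀ mn : {mn : ℤ × ℤ // (F : ℤ) < max |mn.1| |mn.2|},
      ‖(∑ jk ∈ s, a jk * b ((mn : ℤ × ℤ).1 - jk.1, (mn : ℤ × ℤ).2 - jk.2)) *
          g (mn : ℤ × ℤ)‖ ≤
        K / (F : ℝ) ^ p * (u (mn : ℤ × ℤ).1 * u (mn : ℤ × ℤ).2) := by
    rintro ⟨⟨m, n⟩, hmn⟩
    simp only at hmn ⊢
    -- part A : the convolution factor is bounded by M * B
    have hA : ‖∑ jk ∈ s, a jk * b (m - jk.1, n - jk.2)‖ ≤ M * B := by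
      calc ‖∑ jk ∈ s, a jk * b (m - jk.1, n - jk.2)‖
          ≤ ∑ jk ∈ s, ‖a jk * b (m - jk.1, n - jk.2)‖ := norm_sum_le _ _
        _ ≤ ∑ jk ∈ s, M * ‖b (m - jk.1, n - jk.2)‖ := by
            refine Finset.sum_le_sum fun jk _ => ?_
            rw [norm_mul]
            exact mul_le_mul_of_nonneg_right (ha jk) (norm_nonneg _)
        _ = M * ∑ jk ∈ s, ‖b (m - jk.1, n - jk.2)‖ := by rw [Finset.mul_sum]
        _ ≤ M * B := by
            refine mul_le_mul_of_nonneg_left ?_ hM.le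
            have himg : ∑ jk ∈ s, ‖b (m - jk.1, n - jk.2)‖ =
                ∑ x ∈ s.image (fun jk : ℤ × ℤ => (m - jk.1, n - jk.2)), ‖b x‖ := by
              rw [Finset.sum_image]
              intro x _ y _ hxy
              have h1 := congrArg Prod.fst hxy
              have h2 := congrArg Prod.snd hxy
              simp only at h1 h2
              exact Prod.ext (by linarith) (by linarith)
            rw [himg]
            exact Summable.sum_le_tsum _ (fun _ _ => norm_nonneg _) hb
    -- part B : bound on g
    set t : ℝ := 1 + ((max |m| |n| : ℤ) : ℝ) with ht_def
    have hxm : (1 : ℝ) + (m.natAbs : ℝ) ≤ t := by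
      have h : (m.natAbs : ℤ) ≤ max |m| |n| := by
        rw [← Int.abs_eq_natAbs]; exact le_max_left _ _
      have h' : ((m.natAbs : ℤ) : ℝ) ≤ ((max |m| |n| : ℤ) : ℝ) := Int.cast_le.mpr h
      rw [Int.cast_natCast] at h' 
      rw [ht_def]; linarith
    have hxn : (1 : ℝ) + (n.natAbs : ℝ) ≤ t := by
      have h : (n.natAbs : ℤ) ≤ max |m| |n| := by
        rw [← Int.abs_eq_natAbs]; exact le_max_right _ _
      have h' : ((n.natAbs : ℤ) : ℝ) ≤ ((max |m| |n| : ℤ) : ℝ) := Int.cast_le.mpr h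
      rw [Int.cast_natCast] at h' 
      rw [ht_def]; linarith
    have ht1 : (1 : ℝ) ≤ t :=
      le_trans (le_add_of_nonneg_right (by positivity)) hxm
    have ht0 : (0 : ℝ) < t := lt_of_lt_of_le one_pos ht1
    have hFt : (F : ℝ) ≤ t := by
      have : ((F : ℤ) : ℝ) < ((max |m| |n| : ℤ) : ℝ) := by exact_mod_cast hmn
      have := this.le
      simp only [ht_def]
      push_cast at this ⊢
      linarith
    set X : ℝ := (1 + (m.natAbs : ℝ)) * (1 + (n.natAbs : ℝ)) with hX_def
    have hX0 : 0 < X := by positivity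
    have hXt : X ≤ t ^ 2 := by
      rw [sq]
      exact mul_le_mul hxm hxn (by positivity) ht0.le
    have hXe : X ^ e ≤ t ^ (3 : ℕ) := by
      have h1 : X ^ e ≤ (t ^ 2) ^ e := Real.rpow_le_rpow hX0.le hXt (by norm_num [he])
      have h2 : (t ^ 2 : ℝ) ^ e = t ^ (3 : ℕ) := by
        rw [← Real.rpow_natCast t 2, ← Real.rpow_mul ht0.le, ← Real.rpow_natCast t 3]
        norm_num [he]
      linarith [h1, h2.le, h2.ge]
    have huu : u m * u n = (X ^ e)⁻¹ := by
      rw [hu_def]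
      simp only
      rw [← Real.mul_rpow (by positivity) (by positivity), ← hX_def,
        Real.rpow_neg hX0.le]
    have hgB : ‖g (m, n)‖ ≤ Cg / (F : ℝ) ^ p * (u m * u n) := by
      refine le_trans (hg (m, n)) ?_
      have hpow : (F : ℝ) ^ p * X ^ e ≤ t ^ (p + 3) := by
        calc (F : ℝ) ^ p * X ^ e ≤ t ^ p * t ^ (3 : ℕ) := by
              refine mul_le_mul ?_ hXe (by positivity) (by positivity)
              exact pow_le_pow_left₀ (by positivity) hFt p
          _ = t ^ (p + 3) := by rw [← pow_add]
      have hXepos : 0 < X ^ e := Real.rpow_pos_of_pos hX0 e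
      have hident : (1 : ℝ) + ((max |(m, n).1| |(m, n).2| : ℤ) : ℝ) = t := rfl
      rw [hident, huu]
      have hrw : Cg / (F : ℝ) ^ p * (X ^ e)⁻¹ = Cg / ((F : ℝ) ^ p * X ^ e) := by
        field_simp
      rw [hrw]
      gcongr
    calc ‖(∑ jk ∈ s, a jk * b (m - jk.1, n - jk.2)) * g (m, n)‖
        = ‖∑ jk ∈ s, a jk * b (m - jk.1, n - jk.2)‖ * ‖g (m, n)‖ := norm_mul _ _
      _ ≤ (M * B) * (Cg / (F : ℝ) ^ p * (u m * u n)) := by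
          exact mul_le_mul hA hgB (norm_nonneg _) (by positivity)
      _ = K / (F : ℝ) ^ p * (u m * u n) := by rw [hKdef]; ring
  -- global bound
  have hsub : Summable fun mn : {mn : ℤ × ℤ // (F : ℤ) < max |mn.1| |mn.2|} =>
      K / (F : ℝ) ^ p * (u (mn : ℤ × ℤ).1 * u (mn : ℤ × ℤ).2) := by
    exact ((hh2.subtype _).mul_left _)
  have hmain := tsum_of_norm_bounded hsub.hasSum key
  refine le_trans hmain ?_
  rw [tsum_mul_left]
  have hsuble : (∑' mn : {mn : ℤ × ℤ // (F : ℤ) < max |mn.1| |mn.2|},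
      u (mn : ℤ × ℤ).1 * u (mn : ℤ × ℤ).2) ≤ S2 := by
    rw [hS2def]
    exact Summable.tsum_le_tsum_of_inj Subtype.val Subtype.val_injective
      (fun c _ => by positivity) (fun mn => le_rfl) (hh2.subtype _) hh2
  calc K / (F : ℝ) ^ p * ∑' mn : {mn : ℤ × ℤ // (F : ℤ) < max |mn.1| |mn.2|},
        u (mn : ℤ × ℤ).1 * u (mn : ℤ × ℤ).2
      ≤ K / (F : ℝ) ^ p * S2 := by
        exact mul_le_mul_of_nonneg_left hsuble (by positivity)
    _ = K * S2 / (F : ℝ) ^ p := by ring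
    _ ≤ (K * S2 + 1) / (F : ℝ) ^ p := by gcongr; linarith
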